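/- In the badcodeword construction: ψ2 is a unit vector, ⟨ψ1, ψ2⟩ = p^{−k/2}, and ‖ψ1 + ψ2‖² = 2 + 2p^{−k/2}. -/

import Mathlib

open scoped BigOperators
open Matrix

/-- `omg p` is the complex primitive `p`-th root of unity `exp(2πi/p)`. -/
noncomputable def omg (p : ℕ) : ℂ := Complex.exp (2 * Real.pi * Complex.I / p)

/-- The generalized Pauli matrix `XZ(u) = X^{a_1}Z^{b_1} ⊗ ⋯ ⊗ X^{a_n}Z^{b_n}`
for `u = ((a_1,b_1),…,(a_n,b_n)) ∈ (Z_p²)ⁿ`, written out entrywise with respect to the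
computational basis of `(ℂ^p)^{⊗n} ≃ ℂ^{p^n}`, whose coordinates are indexed by
`Fin n → ZMod p`.  (It is the matrix determined by
`XZ(u) |i₁ … iₙ⟩ = ∏_t ω^{b_t i_t} |i₁+a₁, …, iₙ+aₙ⟩`.) -/
noncomputable def XZ (p n : ℕ) (u : Fin n → ZMod p × ZMod p) :
    Matrix (Fin n → ZMod p) (Fin n → ZMod p) ℂ :=
  fun j i => ∏ t : Fin n, if j t = i t + (u t).1 then omg p ^ ((u t).2 * i t).val else 0

/-- The symplectic inner product `⟨u,v⟩ = Σ b_i c_i − a_i d_i` on `Z_p^{2n}`. -/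
def symp (p n : ℕ) (u v : Fin n → ZMod p × ZMod p) : ZMod p :=
  ∑ t : Fin n, ((u t).2 * (v t).1 - (u t).1 * (v t).2)

/-- The standard Hermitian inner product on `I → ℂ`. -/
noncomputable def cinner {I : Type*} [Fintype I] (x y : I → ℂ) : ℂ :=
  ∑ i, (starRingEnd ℂ) (x i) * y i

/-! ### Auxiliary lemmas: the character `ee` -/

section eeLemmas
variable (p : ℕ) [hp : Fact p.Prime]

lemma omg_prim : IsPrimitiveRoot (omg p) p :=
  Complex.isPrimitiveRoot_exp p hp.out.ne_zero

lemma omg_pow_p : omg p ^ p = 1 := (omg_prim p).pow_eq_one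

noncomputable def ee (z : ZMod p) : ℂ := omg p ^ z.val

lemma omg_pow_mod (m : ℕ) : omg p ^ (m % p) = omg p ^ m := by
  conv_rhs => rw [← Nat.div_add_mod m p]
  rw [pow_add, pow_mul, omg_pow_p, one_pow, one_mul]

lemma ee_add (z w : ZMod p) : ee p (z + w) = ee p z * ee p w := by
  have : NeZero p := ⟨hp.out.ne_zero⟩
  rw [ee, ZMod.val_add, omg_pow_mod, pow_add]; rfl

lemma ee_zero : ee p 0 = 1 := by
  have : NeZero p := ⟨hp.out.ne_zero⟩
  simp [ee]

lemma ee_mul_neg (z : ZMod p) : ee p z * ee p (-z) = 1 := by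
  rw [← ee_add, add_neg_cancel, ee_zero]

lemma ee_ne_zero (z : ZMod p) : ee p z ≠ 0 :=
  fun h => by simpa [h] using ee_mul_neg p z

lemma conj_ee (z : ZMod p) : (starRingEnd ℂ) (ee p z) = ee p (-z) := by
  have h1 : (starRingEnd ℂ) (omg p) = (omg p)⁻¹ := by
    rw [omg, ← Complex.exp_conj]
    rw [← Complex.exp_neg]
    congr 1
    simp [map_div₀, Complex.conj_I]
    simp [Complex.conj_ofNat]
    ring
  have h2 : ee p z * ee p (-z) = 1 := ee_mul_neg p z
  have h3 : (starRingEnd ℂ) (ee p z) * ee p z = 1 := by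
    rw [ee, map_pow, h1, inv_pow]
    exact inv_mul_cancel₀ (pow_ne_zero _ (by rw [omg]; exact Complex.exp_ne_zero _))
  calc (starRingEnd ℂ) (ee p z) = (starRingEnd ℂ) (ee p z) * (ee p z * ee p (-z)) := by
        rw [h2, mul_one]
    _ = ee p (-z) := by rw [← mul_assoc, h3, one_mul]

lemma ee_eq_one_iff (z : ZMod p) : ee p z = 1 ↔ z = 0 := by
  have : NeZero p := ⟨hp.out.ne_zero⟩
  rw [ee, (omg_prim p).pow_eq_one_iff_dvd]
  constructor
  · intro h
    have hz : z.val = 0 := Nat.eq_zero_of_dvd_of_lt h (ZMod.val_lt z)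
    exact (ZMod.val_eq_zero z).mp hz
  · rintro rfl; simp

lemma ee_sum {ι : Type*} (s : Finset ι) (f : ι → ZMod p) :
    ee p (∑ i ∈ s, f i) = ∏ i ∈ s, ee p (f i) := by
  classical
  induction s using Finset.induction_on with
  | empty => simp [ee_zero]
  | insert _ _ h ih => rw [Finset.sum_insert h, Finset.prod_insert h, ee_add, ih]

end eeLemmas

/-! ### The action of the Pauli matrices -/

section act
variable (p n : ℕ) [Fact p.Prime]

/-- the phase appearing in the action of `XZ` -/
noncomputable def EE (u : Fin n → ZMod p × ZMod p) (i : Fin n → ZMod p) : ℂ :=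
  ∏ t : Fin n, ee p ((u t).2 * i t)

variable {p n}

/-- the shift appearing in the action of `XZ` -/
def av {p n : ℕ} (u : Fin n → ZMod p × ZMod p) : Fin n → ZMod p := fun t => (u t).1

lemma XZ_entry (u : Fin n → ZMod p × ZMod p) (j i : Fin n → ZMod p) :
    XZ p n u j i = if i = j - av u then EE p n u i else 0 := by
  rcases eq_or_ne i (j - av u) with h | h
  · subst h
    simp only [if_pos rfl, XZ, EE]
    refine Finset.prod_congr rfl fun t _ => ?_
    rw [if_pos (by simp [av, Pi.sub_apply]), ee]
  · rw [if_neg h, XZ]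
    obtain ⟨t, ht⟩ : ∃ t, i t ≠ j t - (u t).1 := by
      by_contra hc
      push_neg at hc
      exact h (funext fun t => by rw [hc]; rfl)
    refine Finset.prod_eq_zero (Finset.mem_univ t) ?_
    rw [if_neg]
    intro hc
    exact ht (by rw [hc]; ring)

lemma XZ_mulVec (u : Fin n → ZMod p × ZMod p) (ψ : (Fin n → ZMod p) → ℂ) :
    XZ p n u *ᵥ ψ = fun j => EE p n u (j - av u) * ψ (j - av u) := by
  funext j
  rw [mulVec]
  simp only [dotProduct, XZ_entry]
  rw [Finset.sum_eq_single (j - av u)]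
  · simp
  · intro i _ hi; rw [if_neg hi, zero_mul]
  · intro h; exact absurd (Finset.mem_univ _) h

lemma EE_add_right (u : Fin n → ZMod p × ZMod p) (i i' : Fin n → ZMod p) :
    EE p n u (i + i') = EE p n u i * EE p n u i' := by
  rw [EE, EE, EE, ← Finset.prod_mul_distrib]
  refine Finset.prod_congr rfl fun t _ => ?_
  rw [Pi.add_apply, mul_add, ee_add]

lemma EE_add_left (u v : Fin n → ZMod p × ZMod p) (i : Fin n → ZMod p) :
    EE p n (u + v) i = EE p n u i * EE p n v i := by
  rw [EE, EE, EE, ← Finset.prod_mul_distrib]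
  refine Finset.prod_congr rfl fun t _ => ?_
  rw [Pi.add_apply, Prod.snd_add, add_mul, ee_add]

lemma EE_zero_right (u : Fin n → ZMod p × ZMod p) : EE p n u 0 = 1 := by
  simp [EE, ee_zero]

lemma EE_zero_left (i : Fin n → ZMod p) : EE p n 0 i = 1 := by
  simp [EE, ee_zero]

lemma EE_ne_zero (u : Fin n → ZMod p × ZMod p) (i : Fin n → ZMod p) : EE p n u i ≠ 0 :=
  Finset.prod_ne_zero_iff.mpr fun t _ => ee_ne_zero p _

lemma conj_EE_mul (u : Fin n → ZMod p × ZMod p) (i : Fin n → ZMod p) :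
    (starRingEnd ℂ) (EE p n u i) * EE p n u i = 1 := by
  rw [EE, map_prod, ← Finset.prod_mul_distrib]
  refine Finset.prod_eq_one fun t _ => ?_
  rw [conj_ee, mul_comm]
  exact ee_mul_neg p _

lemma av_add (u v : Fin n → ZMod p × ZMod p) : av (u + v) = av u + av v := rfl

/-- unitarity -/
lemma cinner_XZ (u : Fin n → ZMod p × ZMod p) (ψ φ : (Fin n → ZMod p) → ℂ) :
    cinner (XZ p n u *ᵥ ψ) (XZ p n u *ᵥ φ) = cinner ψ φ := by
  rw [XZ_mulVec, XZ_mulVec, cinner, cinner]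
  rw [← Equiv.sum_comp (Equiv.addRight (av u)) _]
  refine Finset.sum_congr rfl fun i _ => ?_
  simp only [Equiv.coe_addRight, add_sub_cancel_right]
  calc (starRingEnd ℂ) (EE p n u i * ψ i) * (EE p n u i * φ i)
      = ((starRingEnd ℂ) (EE p n u i) * EE p n u i) * ((starRingEnd ℂ) (ψ i) * φ i) := by
        rw [RingHom.map_mul]; ring
    _ = (starRingEnd ℂ) (ψ i) * φ i := by rw [conj_EE_mul, one_mul]

/-- composition -/
lemma XZ_comp (x w : Fin n → ZMod p × ZMod p) (ψ : (Fin n → ZMod p) → ℂ) :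
    XZ p n x *ᵥ (XZ p n w *ᵥ ψ) = EE p n x (av w) • (XZ p n (x + w) *ᵥ ψ) := by
  rw [XZ_mulVec, XZ_mulVec, XZ_mulVec]
  funext j
  simp only [Pi.smul_apply, smul_eq_mul]
  have h1 : j - av x - av w = j - av (x + w) := by rw [sub_sub, av_add]
  have h2 : EE p n x (j - av x) = EE p n x (j - av (x + w)) * EE p n x (av w) := by
    rw [← EE_add_right]
    congr 1
    funext t
    show j t - (x t).1 = (j t - ((x t).1 + (w t).1)) + (w t).1
    ring
  rw [h1, h2, EE_add_left]
  ring

lemma XZ_zero (ψ : (Fin n → ZMod p) → ℂ) : XZ p n 0 *ᵥ ψ = ψ := by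
  rw [XZ_mulVec]
  funext j
  have : av (0 : Fin n → ZMod p × ZMod p) = 0 := rfl
  rw [this, sub_zero, EE_zero_left, one_mul]

end act

/-! ### Elementary properties of `cinner` -/

section cinnerLemmas
variable {I : Type*} [Fintype I]

lemma cinner_smul_left (a : ℂ) (x y : I → ℂ) :
    cinner (a • x) y = (starRingEnd ℂ) a * cinner x y := by
  simp [cinner, Finset.mul_sum, mul_assoc]

lemma cinner_smul_right (a : ℂ) (x y : I → ℂ) : cinner x (a • y) = a * cinner x y := by
  simp only [cinner, Pi.smul_apply, smul_eq_mul, Finset.mul_sum]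
  exact Finset.sum_congr rfl fun i _ => by ring

lemma cinner_add_left (x x' y : I → ℂ) : cinner (x + x') y = cinner x y + cinner x' y := by
  simp [cinner, add_mul, Finset.sum_add_distrib]

lemma cinner_add_right (x y y' : I → ℂ) : cinner x (y + y') = cinner x y + cinner x y' := by
  simp [cinner, mul_add, Finset.sum_add_distrib]

lemma cinner_sum_left {ι : Type*} (s : Finset ι) (f : ι → I → ℂ) (y : I → ℂ) :
    cinner (∑ i ∈ s, f i) y = ∑ i ∈ s, cinner (f i) y := by
  simp only [cinner, Finset.sum_apply, map_sum, Finset.sum_mul]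
  rw [Finset.sum_comm]

lemma cinner_sum_right {ι : Type*} (s : Finset ι) (x : I → ℂ) (f : ι → I → ℂ) :
    cinner x (∑ i ∈ s, f i) = ∑ i ∈ s, cinner x (f i) := by
  simp only [cinner, Finset.sum_apply, Finset.mul_sum]
  rw [Finset.sum_comm]

lemma cinner_conj_symm (x y : I → ℂ) : (starRingEnd ℂ) (cinner x y) = cinner y x := by
  simp [cinner, map_sum, mul_comm]

end cinnerLemmas

/-! ### The orthogonality lemma -/

section orth
variable {p n : ℕ} [Fact p.Prime]

lemma EE_symp (c w : Fin n → ZMod p × ZMod p) :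
    ee p (symp p n c w) * EE p n w (av c) = EE p n c (av w) := by
  have h1 : EE p n w (av c) = ee p (∑ t : Fin n, (w t).2 * (c t).1) := by
    rw [ee_sum]; rfl
  have h2 : EE p n c (av w) = ee p (∑ t : Fin n, (c t).2 * (w t).1) := by
    rw [ee_sum]; rfl
  rw [h1, h2, ← ee_add]
  congr 1
  rw [symp, ← Finset.sum_add_distrib]
  refine Finset.sum_congr rfl fun t _ => ?_
  ring

lemma cinner_eig_orth {c w : Fin n → ZMod p × ZMod p} {lam : ℂ}
    {ψ1 : (Fin n → ZMod p) → ℂ} (hψ1 : cinner ψ1 ψ1 = 1)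
    (hc : XZ p n c *ᵥ ψ1 = lam • ψ1) (hs : symp p n c w ≠ 0) :
    cinner ψ1 (XZ p n w *ᵥ ψ1) = 0 := by
  set S := cinner ψ1 (XZ p n w *ᵥ ψ1) with hS
  have hlam : (starRingEnd ℂ) lam * lam = 1 := by
    have h := cinner_XZ c ψ1 ψ1
    rw [hc, cinner_smul_left, cinner_smul_right, hψ1] at h
    rw [← mul_assoc] at h
    simpa using h
  have hcw : XZ p n c *ᵥ (XZ p n w *ᵥ ψ1) = EE p n c (av w) • (XZ p n (c + w) *ᵥ ψ1) :=
    XZ_comp c w ψ1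
  have hwc : XZ p n w *ᵥ (XZ p n c *ᵥ ψ1) = EE p n w (av c) • (XZ p n (c + w) *ᵥ ψ1) := by
    rw [XZ_comp w c ψ1, add_comm]
  have hwc' : XZ p n w *ᵥ (XZ p n c *ᵥ ψ1) = lam • (XZ p n w *ᵥ ψ1) := by
    rw [hc, Matrix.mulVec_smul]
  have hEwc : EE p n w (av c) ≠ 0 := EE_ne_zero w (av c)
  have h3 : XZ p n (c + w) *ᵥ ψ1 = (EE p n w (av c))⁻¹ • lam • (XZ p n w *ᵥ ψ1) := by
    rw [← hwc', hwc, smul_smul, inv_mul_cancel₀ hEwc, one_smul]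
  have key : S = cinner (XZ p n c *ᵥ ψ1) (XZ p n c *ᵥ (XZ p n w *ᵥ ψ1)) :=
    (cinner_XZ c ψ1 (XZ p n w *ᵥ ψ1)).symm
  rw [hcw, h3, hc, cinner_smul_left, cinner_smul_right, cinner_smul_right,
    cinner_smul_right, ← hS] at key
  have hmu : ee p (symp p n c w) = EE p n c (av w) * (EE p n w (av c))⁻¹ := by
    field_simp [EE_symp c w]
    exact EE_symp c w
  have key2 : S = ee p (symp p n c w) * S := by
    calc S = (starRingEnd ℂ) lam * (EE p n c (av w) * ((EE p n w (av c))⁻¹ * (lam * S))) := key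
      _ = ((starRingEnd ℂ) lam * lam) * ((EE p n c (av w) * (EE p n w (av c))⁻¹) * S) := by ring
      _ = ee p (symp p n c w) * S := by rw [hlam, one_mul, hmu]
  have hne : ee p (symp p n c w) ≠ 1 := fun h => hs ((ee_eq_one_iff p _).mp h)
  have h4 : (ee p (symp p n c w) - 1) * S = 0 := by
    rw [sub_mul, one_mul, ← key2, sub_self]
  rcases mul_eq_zero.mp h4 with h | h
  · exact absurd (sub_eq_zero.mp h) hne
  · exact h

end orth

/-! ### Counting the representatives -/

section counting
variable (p n : ℕ) [hp : Fact p.Prime]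

lemma symp_sub_right (c v w : Fin n → ZMod p × ZMod p) :
    symp p n c (v - w) = symp p n c v - symp p n c w := by
  rw [symp, symp, symp, ← Finset.sum_sub_distrib]
  refine Finset.sum_congr rfl fun t _ => ?_
  show (c t).2 * ((v t).1 - (w t).1) - (c t).1 * ((v t).2 - (w t).2) = _
  ring

/-- symp as a bilinear form -/
noncomputable def sympB : LinearMap.BilinForm (ZMod p) (Fin n → ZMod p × ZMod p) :=
  LinearMap.mk₂ (ZMod p) (symp p n)
    (fun m₁ m₂ v => by
      rw [symp, symp, symp, ← Finset.sum_add_distrib]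
      refine Finset.sum_congr rfl fun t _ => ?_
      show ((m₁ t).2 + (m₂ t).2) * (v t).1 - ((m₁ t).1 + (m₂ t).1) * (v t).2 = _
      ring)
    (fun a m v => by
      rw [symp, symp, Finset.smul_sum]
      refine Finset.sum_congr rfl fun t _ => ?_
      show (a * (m t).2) * (v t).1 - (a * (m t).1) * (v t).2 = a • _
      simp [smul_eq_mul]; ring)
    (fun m v₁ v₂ => by
      rw [symp, symp, symp, ← Finset.sum_add_distrib]
      refine Finset.sum_congr rfl fun t _ => ?_
      show (m t).2 * ((v₁ t).1 + (v₂ t).1) - (m t).1 * ((v₁ t).2 + (v₂ t).2) = _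
      ring)
    (fun a m v => by
      rw [symp, symp, Finset.smul_sum]
      refine Finset.sum_congr rfl fun t _ => ?_
      show (m t).2 * (a * (v t).1) - (m t).1 * (a * (v t).2) = a • _
      simp [smul_eq_mul]; ring)

lemma sympB_apply (u v : Fin n → ZMod p × ZMod p) : sympB p n u v = symp p n u v := rfl

lemma sympB_nondegenerate : (sympB p n).Nondegenerate := by
  refine (LinearMap.IsRefl.nondegenerate_iff_separatingLeft (LinearMap.IsAlt.isRefl fun u => by
    rw [sympB_apply, symp]; exact Finset.sum_eq_zero fun t _ => by ring)).mpr ?_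
  intro u hu
  funext t
  have h1 := hu (Pi.single t (1, 0))
  have h2 := hu (Pi.single t (0, 1))
  rw [sympB_apply, symp] at h1 h2
  rw [Finset.sum_eq_single t ?side1 (fun h => absurd (Finset.mem_univ t) h)] at h1
  rw [Finset.sum_eq_single t ?side2 (fun h => absurd (Finset.mem_univ t) h)] at h2
  · simp only [Pi.single_eq_same] at h1 h2
    have e1 : (u t).2 = 0 := by simpa using h1
    have e2 : (u t).1 = 0 := by simpa using h2
    show u t = (0 : ZMod p × ZMod p)
    exact Prod.ext e2 e1
  case side1 =>
    intro s _ hs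
    rw [Pi.single_eq_of_ne hs]
    simp
  case side2 =>
    intro s _ hs
    rw [Pi.single_eq_of_ne hs]
    simp

lemma sympB_refl : (sympB p n).IsRefl := by
  apply LinearMap.IsAlt.isRefl
  intro u
  rw [sympB_apply, symp]
  refine Finset.sum_eq_zero fun t _ => ?_
  ring

lemma finrank_V : Module.finrank (ZMod p) (Fin n → ZMod p × ZMod p) = 2 * n := by
  rw [Module.finrank_pi_fintype]
  simp [Module.finrank_prod]
  ring

set_option synthInstance.maxHeartbeats 1000000 in
set_option maxHeartbeats 1000000 in
theorem card_R_eq (k : ℕ) (C Cmax : Submodule (ZMod p) (Fin n → ZMod p × ZMod p))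
    (hkn : k ≤ n)
    (hdimC : Module.finrank (ZMod p) C = n - k)
    (hsub : ∀ u ∈ Cmax, ∀ c ∈ C, symp p n c u = 0)
    (hmax : ∀ u, u ∈ Cmax ↔ ∀ c ∈ Cmax, symp p n c u = 0)
    (R : Finset (Fin n → ZMod p × ZMod p))
    (hRsub : ∀ x ∈ R, ∀ c ∈ C, symp p n c x = 0)
    (hRrep : ∀ v : Fin n → ZMod p × ZMod p, (∀ c ∈ C, symp p n c v = 0) →
      ∃! x, x ∈ R ∧ v - x ∈ Cmax) :
    R.card = p ^ k := by
  classical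
  have hND := sympB_nondegenerate p n
  have hRF := sympB_refl p n
  have hCmaxOrth : Cmax = (sympB p n).orthogonal Cmax := by
    ext u
    rw [LinearMap.BilinForm.mem_orthogonal_iff]
    exact hmax u
  have hfinCmax : Module.finrank (ZMod p) Cmax = n := by
    have h := LinearMap.BilinForm.finrank_orthogonal hND Cmax
    rw [← hCmaxOrth, finrank_V] at h
    have hle : Module.finrank (ZMod p) Cmax ≤ 2 * n := by
      rw [← finrank_V p n]; exact Submodule.finrank_le Cmax
    omega
  set Cperp := (sympB p n).orthogonal C with hCperp
  have hmemCperp : ∀ u, u ∈ Cperp ↔ ∀ c ∈ C, symp p n c u = 0 := fun u =>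
    LinearMap.BilinForm.mem_orthogonal_iff
  have hfinCperp : Module.finrank (ZMod p) Cperp = n + k := by
    have h := LinearMap.BilinForm.finrank_orthogonal hND C
    rw [finrank_V, hdimC] at h
    rw [h]
    omega
  have hCmle : Cmax ≤ Cperp := fun u hu => (hmemCperp u).mpr (hsub u hu)
  set N : Submodule (ZMod p) Cperp := Submodule.comap Cperp.subtype Cmax with hN
  have hfinN : Module.finrank (ZMod p) N = n :=
    (LinearEquiv.finrank_eq (Submodule.comapSubtypeEquivOfLe hCmle)).trans hfinCmax
  have hfinQ : Module.finrank (ZMod p) (Cperp ⧸ N) = k := by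
    have h := Submodule.finrank_quotient_add_finrank N
    rw [hfinN, hfinCperp] at h
    omega
  have : Fintype (Cperp ⧸ N) := Fintype.ofFinite _
  have hcardQ : Fintype.card (Cperp ⧸ N) = p ^ k := by
    rw [Module.card_eq_pow_finrank (K := ZMod p), ZMod.card, hfinQ]
  let f : {x // x ∈ R} → Cperp ⧸ N := fun x =>
    Submodule.Quotient.mk ⟨x.1, (hmemCperp x.1).mpr (hRsub x.1 x.2)⟩
  have hbij : Function.Bijective f := by
    constructor
    · rintro ⟨x, hx⟩ ⟨y, hy⟩ hxy
      have h1 : (⟨x, _⟩ - ⟨y, _⟩ : Cperp) ∈ N := (Submodule.Quotient.eq N).mp hxy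
      have h2 : x - y ∈ Cmax := h1
      obtain ⟨z, hz, huniq⟩ := hRrep x (hRsub x hx)
      have e1 : x = z := huniq x ⟨hx, by simp⟩
      have e2 : y = z := huniq y ⟨hy, h2⟩
      exact Subtype.ext (e1.trans e2.symm)
    · intro q
      obtain ⟨⟨v, hv⟩, rfl⟩ := Submodule.Quotient.mk_surjective N q
      obtain ⟨x, ⟨hxR, hxC⟩, _⟩ := hRrep v ((hmemCperp v).mp hv)
      refine ⟨⟨x, hxR⟩, ?_⟩
      show Submodule.Quotient.mk _ = _
      rw [Submodule.Quotient.eq]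
      show x - v ∈ Cmax
      have hxv : x - v = -(v - x) := by ring
      rw [hxv]
      exact neg_mem hxC
  have hc := Fintype.card_of_bijective hbij
  rw [Fintype.card_coe] at hc
  rw [hc, hcardQ]

end counting

/-- In the badcodeword construction: `ψ2` is a unit vector, `⟨ψ1,ψ2⟩ = p^{−k/2}`,
and `‖ψ1 + ψ2‖² = 2 + 2 p^{−k/2}`. -/
theorem badcodeword_psi2 (p n k : ℕ) [Fact p.Prime]
    (C Cmax : Submodule (ZMod p) (Fin n → ZMod p × ZMod p))
    (hkn : k ≤ n)
    (hdimC : Module.finrank (ZMod p) C = n - k)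
    (hCself : ∀ u ∈ C, ∀ c ∈ C, symp p n c u = 0)
    (hCsub : C ≤ Cmax)
    (hsub : ∀ u ∈ Cmax, ∀ c ∈ C, symp p n c u = 0)
    (hmax : ∀ u, u ∈ Cmax ↔ ∀ c ∈ Cmax, symp p n c u = 0)
    (ψ1 : (Fin n → ZMod p) → ℂ) (hψ1 : cinner ψ1 ψ1 = 1)
    (heig : ∀ c ∈ Cmax, ∃ lam : ℂ, XZ p n c *ᵥ ψ1 = lam • ψ1)
    (R : Finset (Fin n → ZMod p × ZMod p)) (h0R : 0 ∈ R)
    (hRsub : ∀ x ∈ R, ∀ c ∈ C, symp p n c x = 0)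
    (hRrep : ∀ v : Fin n → ZMod p × ZMod p, (∀ c ∈ C, symp p n c v = 0) →
      ∃! x, x ∈ R ∧ v - x ∈ Cmax)
    (ψ2 : (Fin n → ZMod p) → ℂ)
    (hψ2 : ψ2 = ((Real.sqrt (p ^ k) : ℝ) : ℂ)⁻¹ • ∑ x ∈ R, XZ p n x *ᵥ ψ1) :
    cinner ψ2 ψ2 = 1 ∧
      cinner ψ1 ψ2 = ((Real.sqrt (p ^ k) : ℝ) : ℂ)⁻¹ ∧
      cinner (ψ1 + ψ2) (ψ1 + ψ2) = 2 + 2 * ((Real.sqrt (p ^ k) : ℝ) : ℂ)⁻¹ := by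
  classical
  set s : ℂ := ((Real.sqrt (p ^ k) : ℝ) : ℂ) with hs
  have hppos : (0 : ℝ) < (p : ℝ) ^ k :=
    pow_pos (by exact_mod_cast (Fact.out : p.Prime).pos) k
  have hppos' : (0 : ℝ) < ((p ^ k : ℕ) : ℝ) := by push_cast; exact hppos
  have hsreal : Real.sqrt ((p : ℝ) ^ k) > 0 := Real.sqrt_pos.mpr hppos
  have hs_sq : s * s = ((p : ℂ)) ^ k := by
    rw [hs]
    push_cast
    rw [← Complex.ofReal_mul, Real.mul_self_sqrt (le_of_lt hppos)]
    push_cast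
    ring
  have hsne : s ≠ 0 := by
    rw [hs]
    push_cast
    exact_mod_cast ne_of_gt hsreal
  have hconjs : (starRingEnd ℂ) s⁻¹ = s⁻¹ := by
    rw [hs, map_inv₀, Complex.conj_ofReal]
  have hpkne : ((p : ℂ)) ^ k ≠ 0 :=
    pow_ne_zero k (by exact_mod_cast (Fact.out : p.Prime).ne_zero)
  -- the key pairwise computation
  have pair : ∀ x ∈ R, ∀ y ∈ R,
      cinner (XZ p n x *ᵥ ψ1) (XZ p n y *ᵥ ψ1) = if x = y then 1 else 0 := by
    intro x hx y hy
    set w : Fin n → ZMod p × ZMod p := y - x with hw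
    have hxw : x + w = y := by rw [hw]; ring
    have hEx : EE p n x (av w) ≠ 0 := EE_ne_zero x (av w)
    have hy' : XZ p n y *ᵥ ψ1 = (EE p n x (av w))⁻¹ • (XZ p n x *ᵥ (XZ p n w *ᵥ ψ1)) := by
      rw [XZ_comp x w ψ1, hxw, smul_smul, inv_mul_cancel₀ hEx, one_smul]
    rw [hy', cinner_smul_right, cinner_XZ]
    rcases eq_or_ne x y with h | h
    · subst h
      have hw0 : w = 0 := by rw [hw]; ring
      rw [if_pos rfl, hw0, XZ_zero, hψ1]
      have : av (0 : Fin n → ZMod p × ZMod p) = 0 := rfl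
      rw [this, EE_zero_right, inv_one, mul_one]
    · rw [if_neg h]
      -- w ∉ Cmax
      have hwnot : w ∉ Cmax := by
        intro hwC
        obtain ⟨z, _, huniq⟩ := hRrep y (hRsub y hy)
        have e1 : x = z := huniq x ⟨hx, hwC⟩
        have e2 : y = z := huniq y ⟨hy, by simp⟩
        exact h (e1.trans e2.symm)
      have hnc : ¬ (∀ c ∈ Cmax, symp p n c w = 0) := fun hcon => hwnot ((hmax w).mpr hcon)
      push_neg at hnc
      obtain ⟨c, hcC, hcs⟩ := hnc
      obtain ⟨lam, hlam⟩ := heig c hcC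
      rw [cinner_eig_orth hψ1 hlam hcs, mul_zero]
  -- |R| = p^k
  have hcard : R.card = p ^ k :=
    card_R_eq p n k C Cmax hkn hdimC hsub hmax R hRsub hRrep
  -- second claim
  have h12 : cinner ψ1 ψ2 = s⁻¹ := by
    rw [hψ2, cinner_smul_right, cinner_sum_right]
    have : ∀ x ∈ R, cinner ψ1 (XZ p n x *ᵥ ψ1) = if (0 : Fin n → ZMod p × ZMod p) = x
        then 1 else 0 := by
      intro x hx
      have h := pair 0 h0R x hx
      rwa [XZ_zero] at h
    rw [Finset.sum_congr rfl this, Finset.sum_ite_eq R 0 (fun _ => (1 : ℂ)), if_pos h0R,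
      mul_one]
  -- first claim
  have h22 : cinner ψ2 ψ2 = 1 := by
    rw [hψ2, cinner_smul_left, cinner_smul_right, cinner_sum_left]
    have hinner : ∑ x ∈ R, cinner (XZ p n x *ᵥ ψ1) (∑ y ∈ R, XZ p n y *ᵥ ψ1)
        = (R.card : ℂ) := by
      rw [Finset.sum_congr rfl (fun x hx => cinner_sum_right R _ _)]
      rw [Finset.sum_congr rfl (fun x hx => Finset.sum_congr rfl (fun y hy => pair x hx y hy))]
      rw [Finset.sum_congr rfl (fun x hx => Finset.sum_ite_eq R x (fun _ => (1 : ℂ)))]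
      rw [Finset.sum_congr rfl (fun x hx => if_pos hx)]
      simp
    rw [hinner, hcard, hconjs]
    push_cast
    rw [← mul_assoc]
    rw [show s⁻¹ * s⁻¹ = (s * s)⁻¹ by rw [mul_inv]]
    rw [hs_sq]
    exact inv_mul_cancel₀ hpkne
  refine ⟨h22, h12, ?_⟩
  have h21 : cinner ψ2 ψ1 = s⁻¹ := by
    rw [← cinner_conj_symm, h12, hconjs]
  rw [cinner_add_left, cinner_add_right, cinner_add_right, hψ1, h12, h21, h22]
  ring
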